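/- Let K > 0, α ∈ [0,1), ν ∈ (0, 1+α), and suppose γ : [0,∞) → [0,∞) is absolutely continuous with γ(t) ≥ K/(1+t)^α and ((1+t)^α γ(t))' ≤ 0 almost everywhere for t ≥ t₀. Writing λ_ν(t) = (1+t)^ν, there exists t₄ ≥ t₀ such that for almost every t ≥ t₄: -λ_ν'''(t) + (λ_ν' γ)'(t) ≤ -μ (1+t)^{ν-2-α}, where μ = νK(1+α-ν)/2 > 0. -/

import Mathlib

open MeasureTheory Set Filter Real

set_option maxHeartbeats 1000000 in
theorem third_deriv_estimate
    (K α t₀ ν : ℝ) (hK : 0 < K) (hα0 : 0 ≤ α) (hα1 : α < 1) (ht₀ : 0 ≤ t₀)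
    (hν0 : 0 < ν) (hν1 : ν < 1 + α)
    (γ γ' : ℝ → ℝ) (hγnn : ∀ t ≥ (0:ℝ), 0 ≤ γ t)
    (hγderiv : ∀ᵐ t ∂(volume.restrict (Ici t₀)), HasDerivAt γ (γ' t) t)
    (hγlb : ∀ t ≥ t₀, γ t ≥ K / (1 + t) ^ α)
    (h2 : ∀ᵐ t ∂(volume.restrict (Ici t₀)),
      α * (1 + t) ^ (α - 1) * γ t + (1 + t) ^ α * γ' t ≤ 0) :
    ∃ t₄ ≥ t₀, ∀ᵐ t ∂(volume.restrict (Ici t₄)),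
      -(ν * (ν - 1) * (ν - 2) * (1 + t) ^ (ν - 3)) +
        (ν * (ν - 1) * (1 + t) ^ (ν - 2) * γ t + ν * (1 + t) ^ (ν - 1) * γ' t)
      ≤ -(ν * K * (1 + α - ν) / 2) * (1 + t) ^ (ν - 2 - α) := by
  have hαν : 0 < 1 + α - ν := by linarith
  have h1α : 0 < 1 - α := by linarith
  set M : ℝ := |(ν - 1) * (ν - 2)| with hM
  have hM0 : 0 ≤ M := abs_nonneg _
  set B : ℝ := 2 * M / (K * (1 + α - ν)) with hB
  have hB0 : 0 ≤ B := by
    apply div_nonneg (by linarith) (by positivity)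
  set t₄ : ℝ := max t₀ (B ^ (1 / (1 - α))) with ht₄def
  refine ⟨t₄, le_max_left _ _, ?_⟩
  have hsub : Ici t₄ ⊆ Ici t₀ := Ici_subset_Ici.mpr (le_max_left _ _)
  have h2' : ∀ᵐ t ∂(volume.restrict (Ici t₄)),
      α * (1 + t) ^ (α - 1) * γ t + (1 + t) ^ α * γ' t ≤ 0 :=
    h2.filter_mono (ae_mono (Measure.restrict_mono hsub le_rfl))
  have hmem : ∀ᵐ t ∂(volume.restrict (Ici t₄)), t ∈ Ici t₄ :=
    ae_restrict_mem measurableSet_Ici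
  filter_upwards [h2', hmem] with t h2t ht
  have ht4 : t₄ ≤ t := ht
  have ht0 : t₀ ≤ t := le_trans (le_max_left _ _) ht4
  have hs : (0:ℝ) < 1 + t := by linarith
  -- rpow identities
  have e1 : (1 + t) ^ (ν - 1 - α) * (1 + t) ^ (α - 1) = (1 + t) ^ (ν - 2) := by
    rw [← Real.rpow_add hs]; ring_nf
  have e2 : (1 + t) ^ (ν - 1 - α) * (1 + t) ^ α = (1 + t) ^ (ν - 1) := by
    rw [← Real.rpow_add hs]; ring_nf
  have e3 : (1 + t) ^ (ν - 2 - α) * (1 + t) ^ (α - 1) = (1 + t) ^ (ν - 3) := by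
    rw [← Real.rpow_add hs]; ring_nf
  have e4 : (1 + t) ^ (ν - 2) * (1 + t) ^ (-α) = (1 + t) ^ (ν - 2 - α) := by
    rw [← Real.rpow_add hs]; ring_nf
  have e5 : (1 + t) ^ (1 - α) * (1 + t) ^ (α - 1) = 1 := by
    rw [← Real.rpow_add hs]; norm_num
  -- Step 1: the derivative bound
  have h1 : ν * α * (1 + t) ^ (ν - 2) * γ t + ν * (1 + t) ^ (ν - 1) * γ' t ≤ 0 := by
    calc ν * α * (1 + t) ^ (ν - 2) * γ t + ν * (1 + t) ^ (ν - 1) * γ' t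
        = ν * (1 + t) ^ (ν - 1 - α) *
            (α * (1 + t) ^ (α - 1) * γ t + (1 + t) ^ α * γ' t) := by
          rw [← e1, ← e2]; ring
      _ ≤ 0 := mul_nonpos_of_nonneg_of_nonpos (by positivity) h2t
  -- Step 2: using the lower bound on γ
  have hlb : K * (1 + t) ^ (-α) ≤ γ t := by
    have := hγlb t ht0
    rwa [Real.rpow_neg hs.le, ← div_eq_mul_inv]
  have hcoef : ν * (ν - 1 - α) * (1 + t) ^ (ν - 2) ≤ 0 := by
    apply mul_nonpos_of_nonpos_of_nonneg
    · nlinarith [Real.rpow_pos_of_pos hs (ν - 2)]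
    · positivity
  have h2b : ν * (ν - 1 - α) * (1 + t) ^ (ν - 2) * γ t
      ≤ ν * (ν - 1 - α) * K * (1 + t) ^ (ν - 2 - α) := by
    have := mul_le_mul_of_nonpos_left hlb hcoef
    calc ν * (ν - 1 - α) * (1 + t) ^ (ν - 2) * γ t
        ≤ ν * (ν - 1 - α) * (1 + t) ^ (ν - 2) * (K * (1 + t) ^ (-α)) := this
      _ = ν * (ν - 1 - α) * K * (1 + t) ^ (ν - 2 - α) := by
          rw [← e4]; ring
  -- Step 3: the third derivative term is dominated for t ≥ t₄
  have hsB : B ≤ (1 + t) ^ (1 - α) := by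
    have hle : B ^ (1 / (1 - α)) ≤ 1 + t := by
      have : B ^ (1 / (1 - α)) ≤ t₄ := le_max_right _ _
      linarith
    calc B = B ^ ((1 / (1 - α)) * (1 - α)) := by
            rw [one_div, inv_mul_cancel₀ h1α.ne', Real.rpow_one]
      _ = (B ^ (1 / (1 - α))) ^ (1 - α) := Real.rpow_mul hB0 _ _
      _ ≤ (1 + t) ^ (1 - α) :=
          Real.rpow_le_rpow (Real.rpow_nonneg hB0 _) hle h1α.le
  have hsmall : ν * M * (1 + t) ^ (α - 1) ≤ ν * K * (1 + α - ν) / 2 := by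
    have hp : (0:ℝ) < (1 + t) ^ (α - 1) := Real.rpow_pos_of_pos hs _
    have hmul := mul_le_mul_of_nonneg_right hsB
      (le_of_lt (mul_pos (by positivity : (0:ℝ) < ν * K * (1 + α - ν) / 2) hp))
    -- hmul : B * (...) ≤ (1+t)^(1-α) * (...)
    have hBval : ν * K * (1 + α - ν) / 2 * B = ν * M := by
      rw [hB]; field_simp
    calc ν * M * (1 + t) ^ (α - 1)
        = B * (ν * K * (1 + α - ν) / 2 * (1 + t) ^ (α - 1)) := by rw [← hBval]; ring
      _ ≤ (1 + t) ^ (1 - α) * (ν * K * (1 + α - ν) / 2 * (1 + t) ^ (α - 1)) := hmul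
      _ = ν * K * (1 + α - ν) / 2 * ((1 + t) ^ (1 - α) * (1 + t) ^ (α - 1)) := by ring
      _ = ν * K * (1 + α - ν) / 2 := by rw [e5]; ring
  have h3 : -(ν * (ν - 1) * (ν - 2) * (1 + t) ^ (ν - 3))
      ≤ (ν * K * (1 + α - ν) / 2) * (1 + t) ^ (ν - 2 - α) := by
    have hpos : (0:ℝ) < (1 + t) ^ (ν - 2 - α) := Real.rpow_pos_of_pos hs _
    have habs : -(ν * (ν - 1) * (ν - 2)) ≤ ν * M := by
      have h := mul_le_mul_of_nonneg_left (neg_le_abs ((ν - 1) * (ν - 2))) hν0.le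
      calc -(ν * (ν - 1) * (ν - 2)) = ν * -((ν - 1) * (ν - 2)) := by ring
        _ ≤ ν * M := h
    calc -(ν * (ν - 1) * (ν - 2) * (1 + t) ^ (ν - 3))
        = -(ν * (ν - 1) * (ν - 2)) * ((1 + t) ^ (ν - 2 - α) * (1 + t) ^ (α - 1)) := by
          rw [e3]; ring
      _ ≤ (ν * M) * ((1 + t) ^ (ν - 2 - α) * (1 + t) ^ (α - 1)) := by
          apply mul_le_mul_of_nonneg_right habs
          positivity
      _ = (ν * M * (1 + t) ^ (α - 1)) * (1 + t) ^ (ν - 2 - α) := by ring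
      _ ≤ (ν * K * (1 + α - ν) / 2) * (1 + t) ^ (ν - 2 - α) :=
          mul_le_mul_of_nonneg_right hsmall hpos.le
  linarith
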